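/- The simplicial complex β_n (standard and σ subsets of {1, 1̄, ..., n, n̄}) is contractible; equivalently its reduced simplicial homology vanishes in all degrees. -/

import Mathlib

/-- A finite set of vertices `(a, b) : Fin n × Bool` (where `(a, false)` is `a` and
`(a, true)` is `ā`) is *standard* if it is nonempty and contains no pair `{a, ā}`.
These are the simplices of the complex `∂β_n`. -/
def StdSubset (n : ℕ) (I : Finset (Fin n × Bool)) : Prop :=
  I.Nonempty ∧ ∀ a : Fin n, ¬ ((a, false) ∈ I ∧ (a, true) ∈ I)

/-- A finite set of vertices is a *σ subset* (for the complex `β_{n+1}`) if it is nonempty,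
contains both `n+1` and its bar, and contains no other pair `{a, ā}`. -/
def SigmaSubset (n : ℕ) (I : Finset (Fin (n+1) × Bool)) : Prop :=
  I.Nonempty ∧ (Fin.last n, false) ∈ I ∧ (Fin.last n, true) ∈ I ∧
    ∀ a : Fin (n+1), a ≠ Fin.last n → ¬ ((a, false) ∈ I ∧ (a, true) ∈ I)

/-- The geometric vertex map sending `a ↦ e_a` and `ā ↦ -e_a` in `ℝ^n`. -/
noncomputable def vertexMap (n : ℕ) : Fin n × Bool → EuclideanSpace ℝ (Fin n) :=
  fun p => if p.2 then -(EuclideanSpace.single p.1 (1 : ℝ)) else EuclideanSpace.single p.1 1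

/-- The geometric realization of `∂β_n`: the union of the convex hulls of the vertex sets
of its simplices. -/
noncomputable def realStd (n : ℕ) : Set (EuclideanSpace ℝ (Fin n)) :=
  ⋃ I ∈ {I : Finset (Fin n × Bool) | StdSubset n I},
    convexHull ℝ (vertexMap n '' (I : Set (Fin n × Bool)))

/-- The geometric realization of `β_{n+1}`: the union of the convex hulls of the vertex
sets of its (standard and σ) simplices. -/
noncomputable def realBeta (n : ℕ) : Set (EuclideanSpace ℝ (Fin (n+1))) :=
  ⋃ I ∈ {I : Finset (Fin (n+1) × Bool) | StdSubset (n+1) I ∨ SigmaSubset n I},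
    convexHull ℝ (vertexMap (n+1) '' (I : Set (Fin (n+1) × Bool)))

/-- The simplicial complex `β_{n+1}` is contractible. -/
lemma zero_mem_pair (n : ℕ) :
    (0 : EuclideanSpace ℝ (Fin (n+1))) ∈ convexHull ℝ
      (vertexMap (n+1) '' (({(Fin.last n, false), (Fin.last n, true)} :
        Finset (Fin (n+1) × Bool)) : Set (Fin (n+1) × Bool))) := by
  have hv : vertexMap (n+1) (Fin.last n, false) ∈ convexHull ℝ
      (vertexMap (n+1) '' (({(Fin.last n, false), (Fin.last n, true)} :
        Finset (Fin (n+1) × Bool)) : Set (Fin (n+1) × Bool))) :=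
    subset_convexHull ℝ _ ⟨_, by simp, rfl⟩
  have hw : vertexMap (n+1) (Fin.last n, true) ∈ convexHull ℝ
      (vertexMap (n+1) '' (({(Fin.last n, false), (Fin.last n, true)} :
        Finset (Fin (n+1) × Bool)) : Set (Fin (n+1) × Bool))) :=
    subset_convexHull ℝ _ ⟨_, by simp, rfl⟩
  have h := (convex_convexHull ℝ _) hv hw (by norm_num) (by norm_num) (by norm_num : (1/2:ℝ) + 1/2 = 1)
  convert h using 1
  simp [vertexMap, smul_neg]

theorem stmt12 (n : ℕ) : ContractibleSpace (realBeta n) := by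
  set p0 : Fin (n+1) × Bool := (Fin.last n, false)
  set p1 : Fin (n+1) × Bool := (Fin.last n, true)
  have hsig : SigmaSubset n {p0, p1} := by
    refine ⟨⟨p0, by simp [p0, p1]⟩, by simp [p0, p1], by simp [p0, p1], ?_⟩
    intro a ha ⟨h1, h2⟩
    simp [p0, p1, Prod.ext_iff] at h1
    exact ha h1
  have h0 : (0 : EuclideanSpace ℝ (Fin (n+1))) ∈ realBeta n := by
    exact Set.mem_biUnion (Or.inr hsig) (zero_mem_pair n)
  have hstar : StarConvex ℝ 0 (realBeta n) := by
    intro y hy a b ha hb hab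
    rw [smul_zero, zero_add]
    rcases Set.mem_iUnion₂.1 hy with ⟨I, hI, hyI⟩
    set J : Finset (Fin (n+1) × Bool) := I ∪ {p0, p1} with hJ
    have hJsig : SigmaSubset n J := by
      refine ⟨⟨p0, by simp [hJ, p0, p1]⟩, by simp [hJ, p0, p1], by simp [hJ, p0, p1], ?_⟩
      intro c hc ⟨h1, h2⟩
      have hmem : ∀ bb : Bool, (c, bb) ∈ J → (c, bb) ∈ I := by
        intro bb h
        rcases Finset.mem_union.1 h with h | h
        · exact h
        · exfalso
          rcases Finset.mem_insert.1 h with h | h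
          · exact hc (congrArg Prod.fst h)
          · exact hc (congrArg Prod.fst (Finset.mem_singleton.1 h))
      rcases hI with hI | hI
      · exact hI.2 c ⟨hmem _ h1, hmem _ h2⟩
      · exact hI.2.2.2 c hc ⟨hmem _ h1, hmem _ h2⟩
    have hconv : Convex ℝ (convexHull ℝ (vertexMap (n+1) '' (J : Set (Fin (n+1) × Bool)))) :=
      convex_convexHull ℝ _
    have hyJ : y ∈ convexHull ℝ (vertexMap (n+1) '' (J : Set (Fin (n+1) × Bool))) := by
      refine convexHull_mono ?_ hyI
      exact Set.image_mono (by intro x hx; simp [hJ] at hx ⊢; tauto)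
    have h0J : (0 : EuclideanSpace ℝ (Fin (n+1))) ∈
        convexHull ℝ (vertexMap (n+1) '' (J : Set (Fin (n+1) × Bool))) := by
      refine convexHull_mono ?_ (zero_mem_pair n)
      exact Set.image_mono (by intro x hx; simp [hJ] at hx ⊢; tauto)
    have : b • y ∈ convexHull ℝ (vertexMap (n+1) '' (J : Set (Fin (n+1) × Bool))) := by
      have := hconv h0J hyJ ha hb hab
      simpa using this
    exact Set.mem_biUnion (Or.inr hJsig) this
  exact hstar.contractibleSpace ⟨0, h0⟩
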